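/- arXiv:1406.6130 — 5 statements merged into one kernel-verified Lean document; each statement's English description precedes it below -/
import Mathlib

section
/- Let Θ and X be finite nonempty sets, 𝒜 a nonempty set, ℓ : 𝒜 → ℝ^X a loss, and Φ an entropy on Δ_Θ differentiable on relint(Δ_Θ) whose entropic dual Φ* is differentiable on ℝ^Θ with, for every w ∈ ℝ^Θ, ∇Φ*(w) ∈ relint(Δ_Θ) and Φ*(w) = ⟨∇Φ*(w), w⟩ − Φ(∇Φ*(w)), and with ∇Φ*(∇Φ(μ)) = μ for all μ ∈ relint(Δ_Θ). If ℓ is Φ-mixable, then for every initial μ^0 ∈ relint(Δ_Θ), every T ∈ ℕ, every sequence of outcomes x^1, …, x^T ∈ X and every sequence of expert predictions A^1, …, A^T ∈ 𝒜^Θ, there exist predictions â^1, …, â^T ∈ 𝒜 such that for every θ ∈ Θ: Σ_{t=1}^T ℓ_{x^t}(â^t) ≤ Σ_{t=1}^T ℓ_{x^t}(A^t_θ) + D_Φ(δ_θ, μ^0), where δ_θ is the point mass on θ. -/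
set_option linter.unusedSectionVars false

open Finset

/-- The probability simplex on a finite type `Θ`. -/
def probSimplex (Θ : Type*) [Fintype Θ] : Set (Θ → ℝ) :=
  {μ | (∀ θ, 0 ≤ μ θ) ∧ ∑ θ, μ θ = 1}

/-- The relative interior of the probability simplex. -/
def probRelint (Θ : Type*) [Fintype Θ] : Set (Θ → ℝ) :=
  {μ | (∀ θ, 0 < μ θ) ∧ ∑ θ, μ θ = 1}

/-- Standard inner product on `ℝ^Θ`. -/
noncomputable def ip {Θ : Type*} [Fintype Θ] (μ v : Θ → ℝ) : ℝ := ∑ θ, μ θ * v θ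

/-- Entropic dual: `Φ*(v) = sup_{μ ∈ Δ_Θ} ⟨μ, v⟩ - Φ(μ)`. -/
noncomputable def edual {Θ : Type*} [Fintype Θ] (Φ : (Θ → ℝ) → ℝ) (v : Θ → ℝ) : ℝ :=
  sSup ((fun μ => ip μ v - Φ μ) '' probSimplex Θ)

/-- The continuous linear map `v ↦ ⟨w, v⟩` representing a gradient vector `w`. -/
noncomputable def pairCLM {Θ : Type*} [Fintype Θ] (w : Θ → ℝ) : (Θ → ℝ) →L[ℝ] ℝ :=
  ∑ θ, w θ • ContinuousLinearMap.proj θ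

/-- Bregman divergence of `Φ` with gradient map `g`. -/
noncomputable def breg {Θ : Type*} [Fintype Θ] (Φ : (Θ → ℝ) → ℝ)
    (g : (Θ → ℝ) → Θ → ℝ) (μ μ' : Θ → ℝ) : ℝ :=
  Φ μ - Φ μ' - ip (μ - μ') (g μ')


section Aux

variable {Θ : Type*} [Fintype Θ] [DecidableEq Θ] [Nonempty Θ]

lemma pairCLM_apply (w v : Θ → ℝ) : pairCLM w v = ip w v := by
  simp [pairCLM, ip, ContinuousLinearMap.sum_apply, smul_eq_mul]

lemma relint_subset : probRelint Θ ⊆ probSimplex Θ := by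
  intro μ ⟨h1, h2⟩; exact ⟨fun θ => (h1 θ).le, h2⟩

lemma delta_mem (θ : Θ) : (fun θ' => if θ' = θ then (1:ℝ) else 0) ∈ probSimplex Θ := by
  constructor
  · intro θ'; dsimp only; split <;> norm_num
  · simp

lemma ip_delta (θ : Θ) (v : Θ → ℝ) : ip (fun θ' => if θ' = θ then (1:ℝ) else 0) v = v θ := by
  simp only [ip, ite_mul, one_mul, zero_mul]
  rw [Finset.sum_ite_eq' univ θ v]
  simp

lemma ip_add_smul (μ d w : Θ → ℝ) (t : ℝ) :
    ip (μ + t • d) w = ip μ w + t * ip d w := by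
  simp only [ip, Pi.add_apply, Pi.smul_apply, smul_eq_mul, add_mul, Finset.sum_add_distrib,
    Finset.mul_sum]
  ring_nf

lemma ip_sub_left (a b c : Θ → ℝ) : ip (a - b) c = ip a c - ip b c := by
  simp only [ip, Pi.sub_apply, sub_mul, Finset.sum_sub_distrib]

lemma ip_sub_right (a b c : Θ → ℝ) : ip a (b - c) = ip a b - ip a c := by
  simp only [ip, Pi.sub_apply, mul_sub, Finset.sum_sub_distrib]

/-- A convex function (finite) on the simplex is bounded below there. -/
lemma phi_bddBelow {Φ : (Θ → ℝ) → ℝ} (hconv : ConvexOn ℝ (probSimplex Θ) Φ) :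
    ∃ B : ℝ, ∀ μ ∈ probSimplex Θ, B ≤ Φ μ := by
  classical
  set n : ℕ := Fintype.card Θ with hn
  have hnpos : 0 < (n : ℝ) := by
    have := Fintype.card_pos (α := Θ); positivity
  set c : Θ → ℝ := fun _ => 1 / n with hc
  have hcmem : c ∈ probSimplex Θ := by
    constructor
    · intro θ; positivity
    · simp [hc, Finset.sum_const, Finset.card_univ]
      rw [← hn]; exact mul_inv_cancel₀ hnpos.ne'
  -- upper bound M on vertices
  obtain ⟨θM, -, hM⟩ := Finset.exists_max_image (univ : Finset Θ)
    (fun θ => Φ (fun θ' => if θ' = θ then (1:ℝ) else 0)) ⟨Classical.arbitrary Θ, mem_univ _⟩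
  set M : ℝ := Φ (fun θ' => if θ' = θM then (1:ℝ) else 0) with hMdef
  -- Jensen: Φ ν ≤ M for ν in simplex
  have jensen : ∀ ν ∈ probSimplex Θ, Φ ν ≤ M := by
    intro ν ⟨hν1, hν2⟩
    have hrep : ν = ∑ θ, ν θ • (fun θ' => if θ' = θ then (1:ℝ) else 0) := by
      funext θ'
      simp only [Finset.sum_apply, Pi.smul_apply, smul_eq_mul, mul_ite, mul_one, mul_zero]
      rw [Finset.sum_ite_eq univ θ' ν]
      simp
    calc Φ ν = Φ (∑ θ, ν θ • (fun θ' => if θ' = θ then (1:ℝ) else 0)) := by rw [← hrep]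
      _ ≤ ∑ θ, ν θ * Φ (fun θ' => if θ' = θ then (1:ℝ) else 0) :=
          hconv.map_sum_le (fun θ _ => hν1 θ) hν2 (fun θ _ => delta_mem θ)
      _ ≤ ∑ θ, ν θ * M := by
          apply Finset.sum_le_sum
          intro θ _
          exact mul_le_mul_of_nonneg_left (hM θ (mem_univ θ)) (hν1 θ)
      _ = M := by rw [← Finset.sum_mul, hν2, one_mul]
  refine ⟨(2 * n) * Φ c - (2 * n - 1) * M, ?_⟩
  intro μ hμ
  set α : ℝ := 1 / (2 * n) with hα
  have hα0 : 0 < α := by positivity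
  have hα1 : α < 1 := by
    rw [hα, div_lt_one (by positivity)]
    have : (1:ℝ) ≤ n := by exact_mod_cast Fintype.card_pos (α := Θ)
    linarith
  set ν : Θ → ℝ := fun θ => (c θ - α * μ θ) / (1 - α) with hν
  have hνmem : ν ∈ probSimplex Θ := by
    constructor
    · intro θ
      apply div_nonneg _ (by linarith)
      have hμ1 : μ θ ≤ 1 := by
        have := hμ.2
        calc μ θ ≤ ∑ θ', μ θ' := Finset.single_le_sum (fun θ' _ => hμ.1 θ') (mem_univ θ)
          _ = 1 := hμ.2
      have : α * μ θ ≤ α := by nlinarith [hμ.1 θ]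
      have hcθ : c θ = 1 / n := rfl
      rw [hcθ]
      have : α ≤ 1 / n := by
        rw [hα, div_le_div_iff₀ (by positivity) hnpos]
        linarith
      nlinarith [hμ.1 θ]
    · rw [hν]
      rw [← Finset.sum_div]
      rw [div_eq_one_iff_eq (by linarith)]
      rw [Finset.sum_sub_distrib, ← Finset.mul_sum, hμ.2, hcmem.2]
      ring
  have hcomb : c = α • μ + (1 - α) • ν := by
    funext θ
    have h1α : (1:ℝ) - α ≠ 0 := by linarith
    simp only [Pi.add_apply, Pi.smul_apply, smul_eq_mul, hν]
    field_simp
    ring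
  have hcvx := hconv.2 hμ hνmem hα0.le (by linarith : (0:ℝ) ≤ 1 - α) (by ring)
  rw [← hcomb] at hcvx
  simp only [smul_eq_mul] at hcvx
  have hΦν : Φ ν ≤ M := jensen ν hνmem
  have h1 : Φ c ≤ α * Φ μ + (1 - α) * M := by nlinarith
  have hαval : α = 1 / (2 * n) := rfl
  rw [hαval] at h1
  have h2n : (0:ℝ) < 2 * n := by positivity
  have h1' : 2*(n:ℝ) * Φ c ≤ Φ μ + (2*n - 1) * M := by
    calc 2*(n:ℝ)*Φ c ≤ 2*n*(1/(2*n) * Φ μ + (1 - 1/(2*n))*M) :=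
          mul_le_mul_of_nonneg_left h1 h2n.le
      _ = Φ μ + (2*n-1)*M := by field_simp
  linarith


lemma edual_bddAbove {Φ : (Θ → ℝ) → ℝ} (hconv : ConvexOn ℝ (probSimplex Θ) Φ) (w : Θ → ℝ) :
    BddAbove ((fun μ => ip μ w - Φ μ) '' probSimplex Θ) := by
  obtain ⟨B, hB⟩ := phi_bddBelow hconv
  refine ⟨(∑ θ, |w θ|) - B, ?_⟩
  rintro y ⟨μ, hμ, rfl⟩
  have hip : ip μ w ≤ ∑ θ, |w θ| := by
    have hμ1 : ∀ θ, μ θ ≤ 1 := by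
      intro θ
      calc μ θ ≤ ∑ θ', μ θ' := Finset.single_le_sum (fun θ' _ => hμ.1 θ') (mem_univ θ)
        _ = 1 := hμ.2
    refine Finset.sum_le_sum fun θ _ => ?_
    calc μ θ * w θ ≤ μ θ * |w θ| := mul_le_mul_of_nonneg_left (le_abs_self _) (hμ.1 θ)
      _ ≤ 1 * |w θ| := mul_le_mul_of_nonneg_right (hμ1 θ) (abs_nonneg _)
      _ = |w θ| := one_mul _
  have := hB μ hμ
  simp only
  linarith

/-- Fenchel–Young inequality. -/
lemma fy {Φ : (Θ → ℝ) → ℝ} (hconv : ConvexOn ℝ (probSimplex Θ) Φ) {μ' : Θ → ℝ}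
    (hμ' : μ' ∈ probSimplex Θ) (w : Θ → ℝ) :
    ip μ' w - Φ μ' ≤ edual Φ w :=
  le_csSup (edual_bddAbove hconv w) ⟨μ', hμ', rfl⟩

/-- `g (gs w)` agrees with `w` on directions with zero coordinate sum. -/
lemma gradConst {Φ : (Θ → ℝ) → ℝ} (hconv : ConvexOn ℝ (probSimplex Θ) Φ)
    {g gs : (Θ → ℝ) → Θ → ℝ}
    (hg : ∀ μ ∈ probRelint Θ, HasFDerivAt Φ (pairCLM (g μ)) μ)
    (hgsmem : ∀ w : Θ → ℝ, gs w ∈ probRelint Θ)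
    (hfenchel : ∀ w : Θ → ℝ, edual Φ w = ip (gs w) w - Φ (gs w))
    (w d : Θ → ℝ) (hd : ∑ θ, d θ = 0) :
    ip d (g (gs w)) = ip d w := by
  classical
  set μ : Θ → ℝ := gs w with hμdef
  have hμ : μ ∈ probRelint Θ := hgsmem w
  -- choose ε so that μ + t • d stays in the simplex for |t| < ε
  set ε : ℝ := Finset.univ.inf' Finset.univ_nonempty (fun θ => μ θ / (|d θ| + 1)) with hε
  have hεpos : 0 < ε := by
    rw [hε, Finset.lt_inf'_iff]
    intro θ _
    have := hμ.1 θ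
    positivity
  have hmem : ∀ t : ℝ, |t| < ε → μ + t • d ∈ probSimplex Θ := by
    intro t ht
    constructor
    · intro θ
      have h1 : ε ≤ μ θ / (|d θ| + 1) :=
        Finset.inf'_le _ (mem_univ θ)
      have h2 : |t * d θ| ≤ |t| * |d θ| := by rw [abs_mul]
      have h3 : |t| * |d θ| < μ θ := by
        have hpos : (0:ℝ) < |d θ| + 1 := by positivity
        have : |t| < μ θ / (|d θ| + 1) := lt_of_lt_of_le ht h1
        rw [lt_div_iff₀ hpos] at this
        nlinarith [abs_nonneg t, abs_nonneg (d θ)]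
      have : -(μ θ) < t * d θ := by
        have := neg_abs_le (t * d θ)
        rw [abs_mul] at this
        linarith
      simp only [Pi.add_apply, Pi.smul_apply, smul_eq_mul]
      linarith
    · simp only [Pi.add_apply, Pi.smul_apply, smul_eq_mul]
      rw [Finset.sum_add_distrib, hμ.2, ← Finset.mul_sum, hd]
      ring
  -- local minimum of φ t = Φ (μ + t • d) - t * ip d w at 0
  set φ : ℝ → ℝ := fun t => Φ (μ + t • d) - t * ip d w with hφ
  have hlocal : IsLocalMin φ 0 := by
    have hball : ∀ t ∈ Metric.ball (0:ℝ) ε, φ 0 ≤ φ t := by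
      intro t ht
      rw [Metric.mem_ball, Real.dist_eq, sub_zero] at ht
      have hmemt := hmem t ht
      have hFY := fy hconv hmemt w
      rw [hfenchel w, ← hμdef] at hFY
      rw [ip_add_smul] at hFY
      simp only [hφ, zero_smul, add_zero, zero_mul, sub_zero]
      linarith
    have : Metric.ball (0:ℝ) ε ∈ nhds (0:ℝ) := Metric.ball_mem_nhds 0 hεpos
    exact Filter.eventually_of_mem this hball
  have hderiv : HasDerivAt φ (ip (g μ) d - ip d w) 0 := by
    have hline : HasDerivAt (fun t : ℝ => μ + t • d) d 0 := by
      have h1 : HasDerivAt (fun t : ℝ => t • d) ((1:ℝ) • d) 0 := (hasDerivAt_id 0).smul_const d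
      simpa using h1.const_add μ
    have hΦd : HasFDerivAt Φ (pairCLM (g μ)) (μ + (0:ℝ) • d) := by
      simpa using hg μ hμ
    have hcomp := hΦd.comp_hasDerivAt 0 hline
    have : pairCLM (g μ) d = ip (g μ) d := pairCLM_apply _ _
    rw [this] at hcomp
    exact hcomp.sub ((hasDerivAt_id 0).mul_const (ip d w) |>.congr_deriv (by ring))
  have hzero := hlocal.hasDerivAt_eq_zero hderiv
  have hsymm : ip (g μ) d = ip d (g μ) := by
    simp only [ip]
    exact Finset.sum_congr rfl fun θ _ => mul_comm _ _
  rw [hsymm] at hzero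
  linarith

/-- One round of the aggregating algorithm: mix-loss bound via the dual potential. -/
lemma step {X 𝒜 : Type*} (ℓ : 𝒜 → X → ℝ) {Φ : (Θ → ℝ) → ℝ}
    (hconv : ConvexOn ℝ (probSimplex Θ) Φ)
    {g gs : (Θ → ℝ) → Θ → ℝ}
    (hg : ∀ μ ∈ probRelint Θ, HasFDerivAt Φ (pairCLM (g μ)) μ)
    (hgsmem : ∀ w : Θ → ℝ, gs w ∈ probRelint Θ)
    (hfenchel : ∀ w : Θ → ℝ, edual Φ w = ip (gs w) w - Φ (gs w))
    (hmix : ∀ A : Θ → 𝒜, ∀ μ ∈ probRelint Θ, ∃ ahat : 𝒜, ∀ x : X,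
      ℓ ahat x ≤ sInf ((fun μ' => ip μ' (fun θ => ℓ (A θ) x) + breg Φ g μ' μ) ''
        probSimplex Θ))
    (B : Θ → 𝒜) (v : Θ → ℝ) :
    ∃ a : 𝒜, ∀ xx : X, ℓ a xx ≤ edual Φ v - edual Φ (v - fun θ => ℓ (B θ) xx) := by
  obtain ⟨a, ha⟩ := hmix B (gs v) (hgsmem v)
  refine ⟨a, fun xx => ?_⟩
  set c : Θ → ℝ := fun θ => ℓ (B θ) xx with hc
  set v' : Θ → ℝ := v - c with hv'
  have key : ∀ μ' ∈ probSimplex Θ,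
      ip μ' c + breg Φ g μ' (gs v) = Φ μ' - ip μ' v' + edual Φ v := by
    intro μ' hμ'
    have hgc : ip (μ' - gs v) (g (gs v)) = ip (μ' - gs v) v :=
      gradConst hconv hg hgsmem hfenchel v (μ' - gs v) (by
        simp only [Pi.sub_apply, Finset.sum_sub_distrib, hμ'.2, (hgsmem v).2, sub_self])
    simp only [breg, hv']
    rw [hgc, hfenchel v, ip_sub_left, ip_sub_right]
    ring
  have hlb : ∀ y ∈ ((fun μ' => ip μ' c + breg Φ g μ' (gs v)) '' probSimplex Θ),
      edual Φ v - edual Φ v' ≤ y := by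
    rintro y ⟨μ', hμ', rfl⟩
    have hk := key μ' hμ'
    have hFY := fy hconv hμ' v'
    simp only at hk ⊢
    linarith
  have hmemS : edual Φ v - edual Φ v' ∈
      ((fun μ' => ip μ' c + breg Φ g μ' (gs v)) '' probSimplex Θ) := by
    refine ⟨gs v', relint_subset (hgsmem v'), ?_⟩
    have hk := key (gs v') (relint_subset (hgsmem v'))
    simp only at hk ⊢
    rw [hk, hfenchel v']
    ring
  have hinf : sInf ((fun μ' => ip μ' c + breg Φ g μ' (gs v)) '' probSimplex Θ)
      ≤ edual Φ v - edual Φ v' := csInf_le ⟨_, hlb⟩ hmemS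
  exact (ha xx).trans hinf

end Aux

/-- Φ-mixability implies constant regret against each expert. -/
theorem stmt_8 {Θ X 𝒜 : Type*} [Fintype Θ] [DecidableEq Θ] [Nonempty Θ] [Fintype X] [Nonempty X]
    [Nonempty 𝒜]
    (ℓ : 𝒜 → X → ℝ)
    (Φ : (Θ → ℝ) → ℝ)
    (hconv : ConvexOn ℝ (probSimplex Θ) Φ)
    (hlsc : LowerSemicontinuousOn Φ (probSimplex Θ))
    (g gs : (Θ → ℝ) → Θ → ℝ)
    (hg : ∀ μ ∈ probRelint Θ, HasFDerivAt Φ (pairCLM (g μ)) μ)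
    (hgs : ∀ w : Θ → ℝ, HasFDerivAt (edual Φ) (pairCLM (gs w)) w)
    (hgsmem : ∀ w : Θ → ℝ, gs w ∈ probRelint Θ)
    (hfenchel : ∀ w : Θ → ℝ, edual Φ w = ip (gs w) w - Φ (gs w))
    (hinv : ∀ μ ∈ probRelint Θ, gs (g μ) = μ)
    (hmix : ∀ A : Θ → 𝒜, ∀ μ ∈ probRelint Θ, ∃ ahat : 𝒜, ∀ x : X,
      ℓ ahat x ≤ sInf ((fun μ' => ip μ' (fun θ => ℓ (A θ) x) + breg Φ g μ' μ) ''
        probSimplex Θ))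
    (μ0 : Θ → ℝ) (hμ0 : μ0 ∈ probRelint Θ)
    (T : ℕ) (x : Fin T → X) (A : Fin T → Θ → 𝒜) :
    ∃ ahat : Fin T → 𝒜, ∀ θ : Θ,
      ∑ t, ℓ (ahat t) (x t)
        ≤ ∑ t, ℓ (A t θ) (x t)
          + breg Φ g (fun θ' => if θ' = θ then 1 else 0) μ0 := by
  classical
  set W : ℕ → Θ → ℝ := fun n θ' =>
    g μ0 θ' - ∑ t ∈ univ.filter (fun t : Fin T => (t : ℕ) < n), ℓ (A t θ') (x t) with hWdef
  choose ahat ha using fun t : Fin T =>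
    step ℓ hconv hg hgsmem hfenchel hmix (A t) (W t)
  refine ⟨ahat, fun θ => ?_⟩
  have hWsucc : ∀ t : Fin T, (W t - fun θ' => ℓ (A t θ') (x t)) = W ((t : ℕ) + 1) := by
    intro t
    funext θ'
    have hfilter : univ.filter (fun s : Fin T => (s : ℕ) < (t : ℕ) + 1)
        = insert t (univ.filter (fun s : Fin T => (s : ℕ) < (t : ℕ))) := by
      ext s
      simp [Nat.lt_succ_iff_lt_or_eq, Fin.val_eq_val, or_comm]
      exact le_iff_eq_or_lt
    have htns : t ∉ univ.filter (fun s : Fin T => (s : ℕ) < (t : ℕ)) := by simp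
    simp only [Pi.sub_apply, hWdef, hfilter, Finset.sum_insert htns]
    ring
  have hround : ∀ t : Fin T,
      ℓ (ahat t) (x t) ≤ edual Φ (W t) - edual Φ (W ((t : ℕ) + 1)) := by
    intro t
    have := ha t (x t)
    rwa [hWsucc t] at this
  have htel : ∑ t, ℓ (ahat t) (x t) ≤ edual Φ (W 0) - edual Φ (W T) := by
    calc ∑ t, ℓ (ahat t) (x t)
        ≤ ∑ t : Fin T, (edual Φ (W t) - edual Φ (W ((t : ℕ) + 1))) :=
          Finset.sum_le_sum fun t _ => hround t
      _ = ∑ i ∈ range T, (edual Φ (W i) - edual Φ (W (i + 1))) :=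
          Fin.sum_univ_eq_sum_range (fun i => edual Φ (W i) - edual Φ (W (i + 1))) T
      _ = edual Φ (W 0) - edual Φ (W T) := Finset.sum_range_sub' _ T
  have hW0 : W 0 = g μ0 := by
    funext θ'
    simp [hWdef]
  have hWT : W T θ = g μ0 θ - ∑ t, ℓ (A t θ) (x t) := by
    have : univ.filter (fun t : Fin T => (t : ℕ) < T) = univ := by
      apply Finset.filter_true_of_mem
      intro t _
      exact t.isLt
    simp [hWdef, this]
  have hE0 : edual Φ (W 0) = ip μ0 (g μ0) - Φ μ0 := by
    rw [hW0, hfenchel, hinv μ0 hμ0]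
  have hfy := fy hconv (delta_mem θ) (W T)
  rw [ip_delta, hWT] at hfy
  have hipδ : ip ((fun θ' => if θ' = θ then (1:ℝ) else 0) - μ0) (g μ0)
      = g μ0 θ - ip μ0 (g μ0) := by
    rw [ip_sub_left, ip_delta]
  simp only [breg, hipδ]
  linarith
end

section
/- Let Θ and X be finite nonempty sets, 𝒜 a nonempty set, η > 0, and ℓ : 𝒜 → ℝ^X a loss that is η-mixable: for all A ∈ 𝒜^Θ and all μ ∈ Δ_Θ there exists â ∈ 𝒜 such that for all x ∈ X, ℓ_x(â) ≤ −η⁻¹ log Σ_θ μ_θ exp(−η ℓ_x(A_θ)). Then for every T ∈ ℕ, every sequence of outcomes x^1, …, x^T ∈ X and every sequence of expert predictions A^1, …, A^T ∈ 𝒜^Θ, there exist predictions â^1, …, â^T ∈ 𝒜 such that Σ_{t=1}^T ℓ_{x^t}(â^t) ≤ min_{θ∈Θ} Σ_{t=1}^T ℓ_{x^t}(A^t_θ) + η⁻¹ log |Θ|. -/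
open Finset

/-- Classical mixability implies constant regret `η⁻¹ log |Θ|` (Vovk). -/
theorem stmt_10 {Θ X 𝒜 : Type*} [Fintype Θ] [Nonempty Θ] [Fintype X] [Nonempty X]
    [Nonempty 𝒜]
    (η : ℝ) (hη : 0 < η) (ℓ : 𝒜 → X → ℝ)
    (hmix : ∀ A : Θ → 𝒜, ∀ μ ∈ probSimplex Θ, ∃ ahat : 𝒜, ∀ x : X,
      ℓ ahat x ≤ -η⁻¹ * Real.log (∑ θ, μ θ * Real.exp (-(η * ℓ (A θ) x))))
    (T : ℕ) (x : Fin T → X) (A : Fin T → Θ → 𝒜) :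
    ∃ ahat : Fin T → 𝒜, ∀ θ : Θ,
      ∑ t, ℓ (ahat t) (x t)
        ≤ ∑ t, ℓ (A t θ) (x t) + η⁻¹ * Real.log (Fintype.card Θ) := by
  classical
  -- cumulative loss up to (exclusive) time n
  set P : ℕ → Θ → ℝ := fun n θ =>
    ∑ s ∈ Finset.univ.filter (fun s : Fin T => (s : ℕ) < n), ℓ (A s θ) (x s) with hP
  have hPsucc : ∀ (t : Fin T) (θ : Θ),
      P ((t : ℕ) + 1) θ = P (t : ℕ) θ + ℓ (A t θ) (x t) := by
    intro t θ
    have hset : (Finset.univ.filter (fun s : Fin T => (s : ℕ) < (t : ℕ) + 1))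
        = insert t (Finset.univ.filter (fun s : Fin T => (s : ℕ) < (t : ℕ))) := by
      ext s
      simp [Fin.ext_iff, Nat.lt_succ_iff_lt_or_eq, or_comm]
      rw [Fin.le_iff_val_le_val, Fin.lt_iff_val_lt_val]; omega
    simp only [hP, hset]
    rw [Finset.sum_insert (by simp)]
    ring
  set W : ℕ → ℝ := fun n => ∑ θ, Real.exp (-(η * P n θ)) with hW
  have hWpos : ∀ n, 0 < W n := fun n =>
    Finset.sum_pos (fun θ _ => Real.exp_pos _) Finset.univ_nonempty
  set μ : ℕ → Θ → ℝ := fun n θ => Real.exp (-(η * P n θ)) / W n with hμ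
  have hsimp : ∀ n, μ n ∈ probSimplex Θ := by
    intro n
    constructor
    · intro θ; positivity
    · rw [← Finset.sum_div]
      exact div_self (hWpos n).ne'
  choose ahat hahat using fun t : Fin T => hmix (A t) (μ (t : ℕ)) (hsimp (t : ℕ))
  refine ⟨ahat, fun θ => ?_⟩
  have key : ∀ t : Fin T,
      ℓ (ahat t) (x t) ≤ η⁻¹ * (Real.log (W (t : ℕ)) - Real.log (W ((t : ℕ) + 1))) := by
    intro t
    have hsum : (∑ θ, μ (t : ℕ) θ * Real.exp (-(η * ℓ (A t θ) (x t))))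
        = W ((t : ℕ) + 1) / W (t : ℕ) := by
      rw [hW, Finset.sum_div]
      refine Finset.sum_congr rfl fun θ _ => ?_
      rw [hμ]
      rw [hPsucc t θ]
      rw [div_mul_eq_mul_div, ← Real.exp_add]
      ring_nf
      rfl
    have := hahat t (x t)
    rw [hsum] at this
    rw [Real.log_div (hWpos _).ne' (hWpos _).ne'] at this
    linarith [this]
  calc ∑ t, ℓ (ahat t) (x t)
      ≤ ∑ t : Fin T, η⁻¹ * (Real.log (W (t : ℕ)) - Real.log (W ((t : ℕ) + 1))) :=
        Finset.sum_le_sum fun t _ => key t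
    _ = η⁻¹ * (Real.log (W 0) - Real.log (W T)) := by
        rw [← Finset.mul_sum]
        congr 1
        rw [Fin.sum_univ_eq_sum_range (fun n => Real.log (W n) - Real.log (W (n + 1)))]
        exact Finset.sum_range_sub' (fun n => Real.log (W n)) T
    _ ≤ ∑ t, ℓ (A t θ) (x t) + η⁻¹ * Real.log (Fintype.card Θ) := by
        have hW0 : W 0 = Fintype.card Θ := by
          simp [hW, hP]
        have hPT : P T θ = ∑ t, ℓ (A t θ) (x t) := by
          rw [hP]
          simp only
          rw [Finset.filter_true_of_mem (fun s _ => s.isLt)]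
        have hle : Real.exp (-(η * P T θ)) ≤ W T := by
          rw [hW]
          exact Finset.single_le_sum (f := fun θ => Real.exp (-(η * P T θ)))
            (fun θ _ => (Real.exp_pos _).le) (Finset.mem_univ θ)
        have hlog : -(η * P T θ) ≤ Real.log (W T) := by
          calc -(η * P T θ) = Real.log (Real.exp (-(η * P T θ))) := (Real.log_exp _).symm
            _ ≤ Real.log (W T) := Real.log_le_log (Real.exp_pos _) hle
        rw [hW0]
        have hinv : 0 < η⁻¹ := by positivity
        have : η⁻¹ * (Real.log (Fintype.card Θ) - Real.log (W T))
            ≤ η⁻¹ * (Real.log (Fintype.card Θ) + η * P T θ) := by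
          apply mul_le_mul_of_nonneg_left _ hinv.le
          linarith
        calc η⁻¹ * (Real.log (Fintype.card Θ) - Real.log (W T))
            ≤ η⁻¹ * (Real.log (Fintype.card Θ) + η * P T θ) := this
          _ = ∑ t, ℓ (A t θ) (x t) + η⁻¹ * Real.log (Fintype.card Θ) := by
              rw [← hPT]; field_simp; ring
end

section
/- Let X be a finite nonempty set and F : Δ_X → ℝ a convex function differentiable on Δ_X, with entropic dual F*(v) := sup_{p∈Δ_X} ⟨p, v⟩ − F(p). Define ℓ^F : Δ_X → ℝ^X by ℓ^F(p) := F*(∇F(p))𝟙 − ∇F(p). Then for all p, p' ∈ Δ_X: ⟨p, ℓ^F(p')⟩ − ⟨p, ℓ^F(p)⟩ = D_F(p, p') := F(p) − F(p') − ⟨p − p', ∇F(p')⟩. -/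
open Finset

/-- The proper loss associated to an entropy `F` (Savage representation):
`ℓ^F(p) = F*(∇F(p))𝟙 − ∇F(p)`. -/
noncomputable def properLoss {X : Type*} [Fintype X]
    (F : (X → ℝ) → ℝ) (gF : (X → ℝ) → X → ℝ) (p : X → ℝ) : X → ℝ :=
  fun x => edual F (gF p) - gF p x

section Aux
variable {X : Type*} [Fintype X]

lemma pairCLM_apply' (w v : X → ℝ) : pairCLM w v = ∑ θ, w θ * v θ := by
  simp [pairCLM, ContinuousLinearMap.sum_apply, smul_eq_mul]

lemma convexOn_grad_ineq (F : (X → ℝ) → ℝ)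
    (hconv : ConvexOn ℝ (probSimplex X) F)
    (w : X → ℝ) (p : X → ℝ) (hp : p ∈ probSimplex X)
    (hd : HasFDerivAt F (pairCLM w) p)
    (μ : X → ℝ) (hμ : μ ∈ probSimplex X) :
    pairCLM w (μ - p) ≤ F μ - F p := by
  set d : X → ℝ := μ - p with hdd
  have hderiv : HasDerivAt (fun t : ℝ => F (p + t • d)) (pairCLM w d) 0 := by
    have hg : HasDerivAt (fun t : ℝ => p + t • d) d 0 := by
      simpa using ((hasDerivAt_id (0:ℝ)).smul_const d).const_add p
    have hd' : HasFDerivAt F (pairCLM w) ((fun t : ℝ => p + t • d) 0) := by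
      simpa using hd
    exact hd'.comp_hasDerivAt (0:ℝ) hg
  have hslope : Filter.Tendsto (fun t : ℝ => (F (p + t • d) - F p) / t)
      (nhdsWithin 0 (Set.Ioi 0)) (nhds (pairCLM w d)) := by
    have h1 := hasDerivAt_iff_tendsto_slope.mp hderiv
    have h2 : Filter.Tendsto (slope (fun t : ℝ => F (p + t • d)) 0)
        (nhdsWithin 0 (Set.Ioi 0)) (nhds (pairCLM w d)) :=
      h1.mono_left (nhdsWithin_mono 0 (by intro x hx; exact ne_of_gt hx))
    refine h2.congr' ?_
    filter_upwards [self_mem_nhdsWithin] with t ht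
    simp [slope_def_field, div_eq_inv_mul]
  have hub : ∀ᶠ t in nhdsWithin (0:ℝ) (Set.Ioi 0),
      (F (p + t • d) - F p) / t ≤ F μ - F p := by
    filter_upwards [Ioo_mem_nhdsGT_of_mem (Set.left_mem_Ico.mpr one_pos)] with t ht
    have htpos := ht.1
    have ht1 := ht.2
    have hcv := hconv.2 hp hμ (by linarith : (0:ℝ) ≤ 1 - t) (le_of_lt htpos) (by ring)
    have heq : (1 - t) • p + t • μ = p + t • d := by simp only [hdd]; module
    rw [heq] at hcv
    rw [div_le_iff₀ htpos]
    have : (1 - t) • F p + t • F μ = F p + t * (F μ - F p) := by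
      simp only [smul_eq_mul]; ring
    linarith [hcv.trans_eq this]
  have := le_of_tendsto hslope hub
  have hFμ : p + (1:ℝ) • d = μ := by simp [hdd]
  linarith

lemma edual_eq (F : (X → ℝ) → ℝ)
    (hconv : ConvexOn ℝ (probSimplex X) F)
    (gF : (X → ℝ) → X → ℝ)
    (hdiff : ∀ p ∈ probSimplex X, HasFDerivAt F (pairCLM (gF p)) p)
    (p : X → ℝ) (hp : p ∈ probSimplex X) :
    edual F (gF p) = ip p (gF p) - F p := by
  apply IsGreatest.csSup_eq
  constructor
  · exact ⟨p, hp, rfl⟩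
  · rintro x ⟨μ, hμ, rfl⟩
    have h := convexOn_grad_ineq F hconv (gF p) p hp (hdiff p hp) μ hμ
    rw [pairCLM_apply'] at h
    have hkey : ∑ θ, gF p θ * (μ - p) θ = ip μ (gF p) - ip p (gF p) := by
      simp only [ip, Pi.sub_apply, mul_sub]
      rw [Finset.sum_sub_distrib]
      congr 1 <;> exact Finset.sum_congr rfl (fun θ _ => mul_comm _ _)
    rw [hkey] at h
    show ip μ (gF p) - F μ ≤ ip p (gF p) - F p
    linarith

end Aux

/-- The excess risk of `ℓ^F` is the Bregman divergence of `F`. -/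
theorem stmt_12 {X : Type*} [Fintype X] [Nonempty X]
    (F : (X → ℝ) → ℝ)
    (hconv : ConvexOn ℝ (probSimplex X) F)
    (gF : (X → ℝ) → X → ℝ)
    (hdiff : ∀ p ∈ probSimplex X, HasFDerivAt F (pairCLM (gF p)) p)
    (p p' : X → ℝ) (hp : p ∈ probSimplex X) (hp' : p' ∈ probSimplex X) :
    ip p (properLoss F gF p') - ip p (properLoss F gF p)
      = F p - F p' - ip (p - p') (gF p') := by
  have hip : ∀ q, ip p (properLoss F gF q) = edual F (gF q) - ip p (gF q) := by
    intro q
    simp only [ip, properLoss, mul_sub]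
    rw [Finset.sum_sub_distrib, ← Finset.sum_mul, hp.2, one_mul]
  rw [hip, hip, edual_eq F hconv gF hdiff p hp, edual_eq F hconv gF hdiff p' hp']
  have hsub : ip (p - p') (gF p') = ip p (gF p') - ip p' (gF p') := by
    simp only [ip, Pi.sub_apply, sub_mul, Finset.sum_sub_distrib]
  rw [hsub]; ring
end

section
/- Let Θ be a finite nonempty set, X a finite set with |X| ≥ 2, and 𝒜 a nonempty set. Let ℓ : 𝒜 → ℝ^X be a loss such that for every p ∈ Δ_X the infimum inf_{a∈𝒜} ⟨p, ℓ(a)⟩ is attained, and such that the Bayes risk L(p) := inf_{a∈𝒜} ⟨p, ℓ(a)⟩ is strictly concave on Δ_X. Then for any two distinct μ*, μ' ∈ Δ_Θ there exist expert predictions A ∈ 𝒜^Θ and outcomes x*, x' ∈ X such that for every â ∈ 𝒜 at least one of the following strict inequalities holds: ⟨μ*, ℓ_{x*}(A)⟩ < ℓ_{x*}(â), or ⟨μ', ℓ_{x'}(A)⟩ < ℓ_{x'}(â). -/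
open Finset

lemma sum_pair_aux {X : Type*} [Fintype X] [DecidableEq X] {xs x' : X} (h : xs ≠ x')
    (c1 c2 : ℝ) (g : X → ℝ) :
    ∑ x, ((if x = xs then c1 else 0) + (if x = x' then c2 else 0)) * g x
      = c1 * g xs + c2 * g x' := by
  simp [add_mul, Finset.sum_add_distrib, ite_mul, Finset.sum_ite_eq']


/-- For a loss with attained, strictly concave Bayes risk, any two distinct mixtures
can be separated: some expert predictions and outcomes force a strict loss gap. -/
theorem stmt_16 {Θ X 𝒜 : Type*} [Fintype Θ] [Nonempty Θ] [Fintype X] [Nonempty 𝒜]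
    (hX : 2 ≤ Fintype.card X)
    (ℓ : 𝒜 → X → ℝ)
    (hatt : ∀ p ∈ probSimplex X, ∃ a : 𝒜, ∀ a' : 𝒜,
      ∑ x, p x * ℓ a x ≤ ∑ x, p x * ℓ a' x)
    (hL : StrictConcaveOn ℝ (probSimplex X) (fun p => ⨅ a : 𝒜, ∑ x, p x * ℓ a x))
    (μs μ' : Θ → ℝ) (hμs : μs ∈ probSimplex Θ) (hμ' : μ' ∈ probSimplex Θ)
    (hne : μs ≠ μ') :
    ∃ A : Θ → 𝒜, ∃ xs x' : X, ∀ ahat : 𝒜,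
      (∑ θ, μs θ * ℓ (A θ) xs < ℓ ahat xs) ∨ (∑ θ, μ' θ * ℓ (A θ) x' < ℓ ahat x') := by
  classical
  obtain ⟨θ₀, hθ₀⟩ := Function.ne_iff.mp hne
  obtain ⟨xs, x', hxx⟩ : ∃ a b : X, a ≠ b := Fintype.one_lt_card_iff.mp (by omega)
  -- Bayes act extraction
  have bayes : ∀ p ∈ probSimplex X, ∃ a : 𝒜,
      (∀ a', ∑ x, p x * ℓ a x ≤ ∑ x, p x * ℓ a' x) ∧
      (⨅ a' : 𝒜, ∑ x, p x * ℓ a' x) = ∑ x, p x * ℓ a x := by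
    intro p hp
    obtain ⟨a, ha⟩ := hatt p hp
    have hbdd : BddBelow (Set.range fun a' : 𝒜 => ∑ x, p x * ℓ a' x) := by
      refine ⟨∑ x, p x * ℓ a x, ?_⟩
      rintro y ⟨a', rfl⟩; exact ha a'
    exact ⟨a, ha, le_antisymm (ciInf_le hbdd a) (le_ciInf ha)⟩
  set l1 := μs θ₀ with hl1def
  set l2 := μ' θ₀ with hl2def
  have hl10 : 0 ≤ l1 := hμs.1 θ₀
  have hl20 : 0 ≤ l2 := hμ'.1 θ₀
  have hl11 : l1 ≤ 1 := by
    have := Finset.single_le_sum (f := μs) (fun i _ => hμs.1 i) (Finset.mem_univ θ₀)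
    rw [hμs.2] at this; exact this
  have hl21 : l2 ≤ 1 := by
    have := Finset.single_le_sum (f := μ') (fun i _ => hμ'.1 i) (Finset.mem_univ θ₀)
    rw [hμ'.2] at this; exact this
  have hs1 : 0 < l1 + l2 := by rcases hθ₀.lt_or_gt with h | h <;> linarith
  have hs2 : 0 < (1 - l1) + (1 - l2) := by rcases hθ₀.lt_or_gt with h | h <;> linarith
  set u : X → ℝ := fun x => ((if x = xs then l1 else 0) + (if x = x' then l2 else 0)) / (l1 + l2) with hudef
  set v : X → ℝ := fun x => ((if x = xs then 1 - l1 else 0) + (if x = x' then 1 - l2 else 0)) / ((1 - l1) + (1 - l2)) with hvdef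
  set r : X → ℝ := fun x => ((if x = xs then (1:ℝ) else 0) + (if x = x' then (1:ℝ) else 0)) / 2 with hrdef
  have hu : u ∈ probSimplex X := by
    constructor
    · intro x; simp only [hudef]
      apply div_nonneg _ hs1.le
      split_ifs <;> linarith
    · simp only [hudef, ← Finset.sum_div, Finset.sum_add_distrib, Finset.sum_ite_eq',
        Finset.mem_univ, if_true]
      field_simp
  have hv : v ∈ probSimplex X := by
    constructor
    · intro x; simp only [hvdef]
      apply div_nonneg _ hs2.le
      split_ifs <;> linarith
    · simp only [hvdef, ← Finset.sum_div, Finset.sum_add_distrib, Finset.sum_ite_eq',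
        Finset.mem_univ, if_true]
      field_simp
  have hr : r ∈ probSimplex X := by
    constructor
    · intro x; simp only [hrdef]
      apply div_nonneg _ (by norm_num)
      split_ifs <;> norm_num
    · simp only [hrdef, ← Finset.sum_div, Finset.sum_add_distrib, Finset.sum_ite_eq',
        Finset.mem_univ, if_true]
      norm_num
  have huv : u ≠ v := by
    intro h
    have h1 := congrFun h xs
    simp only [hudef, hvdef, if_pos rfl, if_neg hxx, add_zero] at h1
    have h2 : l1 * ((1 - l1) + (1 - l2)) = (1 - l1) * (l1 + l2) := by
      field_simp at h1; simp only [↓reduceIte] at h1; linarith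
    exact hθ₀ (by nlinarith)
  obtain ⟨a, ha, hLa⟩ := bayes u hu
  obtain ⟨b, hb, hLb⟩ := bayes v hv
  obtain ⟨c, hc, hLc⟩ := bayes r hr
  have hcomb : ((l1 + l2)/2) • u + (((1 - l1) + (1 - l2))/2) • v = r := by
    funext x
    simp only [hudef, hvdef, hrdef, Pi.add_apply, Pi.smul_apply, smul_eq_mul]
    split_ifs <;> field_simp <;> ring
  have hconc := hL.2 hu hv huv (by linarith : (0:ℝ) < (l1 + l2)/2)
    (by linarith : (0:ℝ) < ((1 - l1) + (1 - l2))/2) (by ring)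
  rw [hcomb] at hconc
  simp only [smul_eq_mul] at hconc
  -- the expert predictions
  set A : Θ → 𝒜 := fun θ => if θ = θ₀ then a else b with hAdef
  have hm : ∀ (μ : Θ → ℝ), μ ∈ probSimplex Θ → ∀ x,
      ∑ θ, μ θ * ℓ (A θ) x = μ θ₀ * ℓ a x + (1 - μ θ₀) * ℓ b x := by
    intro μ hμ x
    rw [← Finset.add_sum_erase _ _ (Finset.mem_univ θ₀)]
    have : ∑ θ ∈ Finset.univ.erase θ₀, μ θ * ℓ (A θ) x
        = ∑ θ ∈ Finset.univ.erase θ₀, μ θ * ℓ b x := by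
      refine Finset.sum_congr rfl fun θ hθ => ?_
      rw [hAdef]; simp [Finset.ne_of_mem_erase hθ]
    rw [this, ← Finset.sum_mul, Finset.sum_erase_eq_sub (Finset.mem_univ θ₀), hμ.2,
      hAdef]
    simp
  refine ⟨A, xs, x', fun ahat => ?_⟩
  by_contra hcon
  push_neg at hcon
  obtain ⟨h1, h2⟩ := hcon
  rw [hm μs hμs] at h1
  rw [hm μ' hμ'] at h2
  -- value computations
  have e1 : ∑ x, u x * ℓ a x = (l1 * ℓ a xs + l2 * ℓ a x') / (l1 + l2) := by
    have step : ∀ x, u x * ℓ a x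
        = ((if x = xs then l1 else 0) + (if x = x' then l2 else 0)) * ℓ a x / (l1 + l2) := by
      intro x; rw [hudef]; ring
    rw [Finset.sum_congr rfl fun x _ => step x, ← Finset.sum_div, sum_pair_aux hxx]
  have e2 : ∑ x, v x * ℓ b x = ((1 - l1) * ℓ b xs + (1 - l2) * ℓ b x') / ((1 - l1) + (1 - l2)) := by
    have step : ∀ x, v x * ℓ b x
        = ((if x = xs then 1 - l1 else 0) + (if x = x' then 1 - l2 else 0)) * ℓ b x / ((1 - l1) + (1 - l2)) := by
      intro x; rw [hvdef]; ring
    rw [Finset.sum_congr rfl fun x _ => step x, ← Finset.sum_div, sum_pair_aux hxx]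
  have e3 : ∑ x, r x * ℓ ahat x = (ℓ ahat xs + ℓ ahat x') / 2 := by
    have step : ∀ x, r x * ℓ ahat x
        = ((if x = xs then (1:ℝ) else 0) + (if x = x' then (1:ℝ) else 0)) * ℓ ahat x / 2 := by
      intro x; rw [hrdef]; ring
    rw [Finset.sum_congr rfl fun x _ => step x, ← Finset.sum_div, sum_pair_aux hxx]
    ring
  have hLr_le : (⨅ a' : 𝒜, ∑ x, r x * ℓ a' x) ≤ ∑ x, r x * ℓ ahat x := by
    rw [hLc]; exact hc ahat
  rw [hLa, e1] at hconc
  rw [hLb, e2] at hconc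
  have key : (l1 + l2)/2 * ((l1 * ℓ a xs + l2 * ℓ a x') / (l1 + l2))
      + ((1 - l1) + (1 - l2))/2 * (((1 - l1) * ℓ b xs + (1 - l2) * ℓ b x') / ((1 - l1) + (1 - l2)))
      = ((l1 * ℓ a xs + (1 - l1) * ℓ b xs) + (l2 * ℓ a x' + (1 - l2) * ℓ b x')) / 2 := by
    field_simp
    ring
  rw [e3] at hLr_le
  linarith
end

section
/- Let Θ and X be finite nonempty sets and 𝒜 a nonempty set. Let Φ be an entropy on Δ_Θ differentiable on relint(Δ_Θ), and suppose Φ is also differentiable (relative to the affine hull of Δ_Θ) at some point π on the relative boundary of Δ_Θ, so that the Bregman divergence D_Φ(·, π) is defined and ‖∇Φ(π)‖ < ∞. Let ℓ : 𝒜 → ℝ^X be a nontrivial loss: there exist x*, x' ∈ X and a*, a' ∈ 𝒜 such that ℓ_{x'}(a') = inf_{a∈𝒜} ℓ_{x'}(a), ℓ_{x*}(a') = inf{ℓ_{x*}(a) : a ∈ 𝒜, ℓ_{x'}(a) = inf_{a''∈𝒜} ℓ_{x'}(a'')}, and inf_{a∈𝒜} ℓ_{x*}(a) = ℓ_{x*}(a*)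 < ℓ_{x*}(a'). Then for every η > 0, ℓ fails the η⁻¹Φ-mixability inequality at π: there exists A ∈ 𝒜^Θ such that for every â ∈ 𝒜 there exist μ ∈ Δ_Θ and x ∈ X with ⟨μ, ℓ_x(A)⟩ + η D_Φ(μ, π) < ℓ_x(â). -/
open Finset

/-- If `Φ` is differentiable at a relative-boundary point `π` (with gradient `gπ`),
then every nontrivial loss fails the mixability inequality at `π`, at every scale. -/
theorem stmt_19 {Θ X 𝒜 : Type*} [Fintype Θ] [Nonempty Θ] [Fintype X] [Nonempty X]
    [Nonempty 𝒜]
    (Φ : (Θ → ℝ) → ℝ)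
    (hconv : ConvexOn ℝ (probSimplex Θ) Φ)
    (hlsc : LowerSemicontinuousOn Φ (probSimplex Θ))
    (g : (Θ → ℝ) → Θ → ℝ)
    (hg : ∀ μ ∈ probRelint Θ, HasFDerivAt Φ (pairCLM (g μ)) μ)
    (π : Θ → ℝ) (hπ : π ∈ probSimplex Θ) (hπb : π ∉ probRelint Θ)
    (gπ : Θ → ℝ) (hgπ : HasFDerivAt Φ (pairCLM gπ) π)
    (ℓ : 𝒜 → X → ℝ)
    (xs x' : X) (as a' : 𝒜)
    (ha'min : ∀ a : 𝒜, ℓ a' x' ≤ ℓ a x')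
    (ha'best : ∀ a : 𝒜, (∀ b : 𝒜, ℓ a x' ≤ ℓ b x') → ℓ a' xs ≤ ℓ a xs)
    (hasmin : ∀ a : 𝒜, ℓ as xs ≤ ℓ a xs)
    (hlt : ℓ as xs < ℓ a' xs)
    (η : ℝ) (hη : 0 < η) :
    ∃ A : Θ → 𝒜, ∀ ahat : 𝒜, ∃ μ ∈ probSimplex Θ, ∃ x : X,
      ip μ (fun θ => ℓ (A θ) x) + η * (Φ μ - Φ π - ip (μ - π) gπ) < ℓ ahat x := by
  classical
  obtain ⟨hπ0, hπs⟩ := hπ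
  have hθ0 : ∃ θ0, π θ0 = 0 := by
    by_contra h
    push_neg at h
    exact hπb ⟨fun θ => lt_of_le_of_ne (hπ0 θ) (Ne.symm (h θ)), hπs⟩
  obtain ⟨θ0, hθ0⟩ := hθ0
  set A : Θ → 𝒜 := fun θ => if θ = θ0 then as else a' with hA
  have key : ∀ μ : Θ → ℝ, (∑ θ, μ θ = 1) → ∀ x,
      ip μ (fun θ => ℓ (A θ) x) = μ θ0 * ℓ as x + (1 - μ θ0) * ℓ a' x := by
    intro μ hμ x
    have h1 : (fun θ => μ θ * ℓ (A θ) x)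
        = fun θ => μ θ * ℓ a' x + (if θ = θ0 then μ θ0 * (ℓ as x - ℓ a' x) else 0) := by
      funext θ
      by_cases h : θ = θ0 <;> simp [hA, h] <;> ring
    unfold ip
    rw [show (∑ θ, μ θ * (fun θ => ℓ (A θ) x) θ) = ∑ θ, (μ θ * ℓ a' x +
        (if θ = θ0 then μ θ0 * (ℓ as x - ℓ a' x) else 0)) from by
      rw [← h1]]
    rw [Finset.sum_add_distrib, ← Finset.sum_mul, hμ,
      Finset.sum_ite_eq' Finset.univ θ0 (fun _ => μ θ0 * (ℓ as x - ℓ a' x))]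
    simp
    ring
  refine ⟨A, fun ahat => ?_⟩
  by_cases hcase : ℓ a' x' < ℓ ahat x'
  · refine ⟨π, ⟨hπ0, hπs⟩, x', ?_⟩
    have h0 : ip (π - π) gπ = 0 := by simp [ip]
    rw [key π hπs x', hθ0, h0]
    simp only [sub_self, mul_zero, sub_zero]
    linarith
  · push_neg at hcase
    have hmin : ∀ b, ℓ ahat x' ≤ ℓ b x' := fun b => hcase.trans (ha'min b)
    have hbest : ℓ a' xs ≤ ℓ ahat xs := ha'best ahat hmin
    set c : ℝ := ℓ a' xs - ℓ as xs with hc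
    have hc0 : 0 < c := sub_pos.mpr hlt
    set v : Θ → ℝ := (fun θ => if θ = θ0 then (1:ℝ) else 0) - π with hv
    have hv0 : v θ0 = 1 := by simp [hv, hθ0]
    have hvn : 0 < ‖v‖ := by
      rw [norm_pos_iff]
      intro h
      rw [h] at hv0
      simp at hv0
    set ε : ℝ := c / (2 * η * ‖v‖) with hε
    have hε0 : 0 < ε := div_pos hc0 (by positivity)
    have hlo := hgπ.isLittleO.def hε0
    have htend : Filter.Tendsto (fun t : ℝ => π + t • v) (nhdsWithin 0 (Set.Ioi 0)) (nhds π) := by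
      have h1 : Filter.Tendsto (fun t : ℝ => π + t • v) (nhds 0) (nhds (π + (0:ℝ) • v)) := by
        exact Filter.Tendsto.const_add π ((continuous_id.smul continuous_const).tendsto 0)
      simp only [zero_smul, add_zero] at h1
      exact h1.mono_left nhdsWithin_le_nhds
    have hev : ∀ᶠ t : ℝ in nhdsWithin 0 (Set.Ioi 0), (0 < t ∧ t < 1) ∧
        ‖Φ (π + t • v) - Φ π - pairCLM gπ ((π + t • v) - π)‖ ≤ ε * ‖(π + t • v) - π‖ := by
      have h1 : ∀ᶠ t : ℝ in nhdsWithin 0 (Set.Ioi 0), 0 < t ∧ t < 1 := by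
        filter_upwards [Ioo_mem_nhdsGT_of_mem (Set.left_mem_Ico.mpr one_pos)] with t ht
        exact ⟨ht.1, ht.2⟩
      filter_upwards [h1, htend.eventually hlo] with t ht hlt'
      exact ⟨ht, hlt'⟩
    obtain ⟨t, ⟨ht0, ht1⟩, htD⟩ := hev.exists
    set μ : Θ → ℝ := π + t • v with hμdef
    have hμθ : ∀ θ, μ θ = (1 - t) * π θ + t * (if θ = θ0 then (1:ℝ) else 0) := by
      intro θ
      by_cases h : θ = θ0 <;>
        simp [hμdef, hv, Pi.add_apply, Pi.smul_apply, Pi.sub_apply, h] <;> ring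
    have hμmem : μ ∈ probSimplex Θ := by
      constructor
      · intro θ
        rw [hμθ θ]
        have := hπ0 θ
        by_cases h : θ = θ0 <;> simp [h] <;> nlinarith
      · have : ∑ θ, μ θ = ∑ θ, ((1 - t) * π θ + t * (if θ = θ0 then (1:ℝ) else 0)) :=
          Finset.sum_congr rfl fun θ _ => hμθ θ
        rw [this, Finset.sum_add_distrib, ← Finset.mul_sum, ← Finset.mul_sum, hπs,
          Finset.sum_ite_eq' Finset.univ θ0 (fun _ => (1:ℝ))]
        simp
    have hμθ0 : μ θ0 = t := by rw [hμθ θ0]; simp [hθ0]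
    refine ⟨μ, hμmem, xs, ?_⟩
    rw [key μ hμmem.2 xs, hμθ0]
    -- relate pairCLM and ip
    have hpair : ∀ u : Θ → ℝ, pairCLM gπ u = ip u gπ := by
      intro u
      simp [pairCLM, ip, ContinuousLinearMap.sum_apply, ContinuousLinearMap.smul_apply,
        ContinuousLinearMap.proj_apply, mul_comm]
    have hnorm : ‖μ - π‖ = t * ‖v‖ := by
      have : μ - π = t • v := by simp [hμdef]
      rw [this, norm_smul, Real.norm_eq_abs, abs_of_pos ht0]
    rw [hpair ((π + t • v) - π)] at htD
    have hsub : (π + t • v) - π = μ - π := by simp [hμdef]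
    rw [hsub, hnorm] at htD
    have hD : Φ μ - Φ π - ip (μ - π) gπ ≤ ε * (t * ‖v‖) :=
      le_trans (le_abs_self _) htD
    have hεv : ε * ‖v‖ = c / (2 * η) := by
      rw [hε]
      field_simp
    have hηD : η * (Φ μ - Φ π - ip (μ - π) gπ) ≤ t * c / 2 := by
      have h2 : η * (Φ μ - Φ π - ip (μ - π) gπ) ≤ η * (ε * (t * ‖v‖)) :=
        mul_le_mul_of_nonneg_left hD hη.le
      have h3 : η * (ε * (t * ‖v‖)) = t * c / 2 := by
        have : ε * (t * ‖v‖) = t * (ε * ‖v‖) := by ring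
        rw [this, hεv]
        field_simp
      linarith
    have hlin : t * ℓ as xs + (1 - t) * ℓ a' xs = ℓ a' xs - t * c := by
      rw [hc]; ring
    nlinarith [mul_pos ht0 hc0]
end
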